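/- Let P = [a] × [2b] with partial order (x,y) ⪯ (z,t) iff (x,y)=(z,t), or (x<z and y<t), or (y ≤ b and t ≥ b+1 and y < t-b). Then any antichain of P has at most a+b elements. -/

import Mathlib

/-- A step moves one unit down `(1,0)` or one unit left `(0,-1)`. -/
def Step (p q : ℤ × ℤ) : Prop := q = p + (1, 0) ∨ q = p + (0, -1)

/-- `l` is a path starting at `p` and ending at `q`, each consecutive
difference being `(1,0)` or `(0,-1)`. -/
def IsPathFromTo (l : List (ℤ × ℤ)) (p q : ℤ × ℤ) : Prop :=
  l.Chain' Step ∧ l.head? = some p ∧ l.getLast? = some q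

/-- Membership in the poset `P = [a] × [2b]`, viewed inside `ℤ × ℤ`. -/
def memP (a b : ℕ) (p : ℤ × ℤ) : Prop :=
  1 ≤ p.1 ∧ p.1 ≤ (a : ℤ) ∧ 1 ≤ p.2 ∧ p.2 ≤ 2 * (b : ℤ)

/-- The partial order on `P = [a] × [2b]`:
`(x,y) ⪯ (z,t)` iff `(x,y) = (z,t)`, or `x < z` and `y < t`,
or `y ≤ b`, `t ≥ b+1` and `y < t - b`. -/
def ple (b : ℕ) (p q : ℤ × ℤ) : Prop :=
  p = q ∨ (p.1 < q.1 ∧ p.2 < q.2) ∨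
    (p.2 ≤ (b : ℤ) ∧ (b : ℤ) + 1 ≤ q.2 ∧ p.2 < q.2 - (b : ℤ))

private lemma card_aux (T : Finset (ℤ × ℤ)) (lo hi : ℤ)
    (hinj : Set.InjOn (fun p : ℤ × ℤ => p.1 - p.2) T)
    (hmem : ∀ p ∈ T, lo ≤ p.1 - p.2 ∧ p.1 - p.2 ≤ hi) :
    (T.card : ℤ) ≤ (hi + 1 - lo).toNat := by
  have h1 : T.image (fun p : ℤ × ℤ => p.1 - p.2) ⊆ Finset.Icc lo hi := by
    intro x hx
    simp only [Finset.mem_image] at hx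
    obtain ⟨p, hp, rfl⟩ := hx
    exact Finset.mem_Icc.2 ⟨(hmem p hp).1, (hmem p hp).2⟩
  have h2 := Finset.card_le_card h1
  rw [Finset.card_image_of_injOn hinj, Int.card_Icc] at h2
  exact_mod_cast h2

theorem stmt_5 (a b : ℕ) (ha : 2 ≤ a) (hab : a ≤ b) (S : Finset (ℤ × ℤ))
    (hS : ∀ p ∈ S, memP a b p) (hA : IsAntichain (ple b) (S : Set (ℤ × ℤ))) :
    S.card ≤ a + b := by
  classical
  have hinj : Set.InjOn (fun p : ℤ × ℤ => p.1 - p.2) (S : Set (ℤ × ℤ)) := by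
    intro p hp q hq hfpq
    simp only at hfpq
    by_contra hne
    rcases lt_trichotomy p.1 q.1 with h | h | h
    · exact hA hp hq hne (Or.inr (Or.inl ⟨h, by omega⟩))
    · exact hne (Prod.ext h (by omega))
    · exact hA hq hp (Ne.symm hne) (Or.inr (Or.inl ⟨h, by omega⟩))
  set S1 := S.filter (fun p : ℤ × ℤ => p.2 ≤ (b : ℤ)) with hS1
  set S2 := S.filter (fun p : ℤ × ℤ => ¬ p.2 ≤ (b : ℤ)) with hS2
  have hcard : S1.card + S2.card = S.card :=
    Finset.card_filter_add_card_filter_not _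
  have hsub1 : S1 ⊆ S := Finset.filter_subset _ _
  have hsub2 : S2 ⊆ S := Finset.filter_subset _ _
  have hinj1 : Set.InjOn (fun p : ℤ × ℤ => p.1 - p.2) (S1 : Set (ℤ × ℤ)) :=
    hinj.mono (by exact_mod_cast hsub1)
  have hinj2 : Set.InjOn (fun p : ℤ × ℤ => p.1 - p.2) (S2 : Set (ℤ × ℤ)) :=
    hinj.mono (by exact_mod_cast hsub2)
  -- cross incomparability
  have hcross : ∀ p ∈ S1, ∀ q ∈ S2, q.1 ≤ p.1 ∧ q.2 - (b : ℤ) ≤ p.2 := by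
    intro p hp q hq
    have hp2 : p.2 ≤ (b : ℤ) := (Finset.mem_filter.1 hp).2
    have hq2 : ¬ q.2 ≤ (b : ℤ) := (Finset.mem_filter.1 hq).2
    have hne : p ≠ q := by
      intro h; rw [h] at hp2; exact hq2 hp2
    have h : ¬ ple b p q := hA (hsub1 hp) (hsub2 hq) hne
    have hnot1 : ¬ (p.1 < q.1 ∧ p.2 < q.2) := fun hc => h (Or.inr (Or.inl hc))
    have hnot2 : ¬ (p.2 ≤ (b : ℤ) ∧ (b : ℤ) + 1 ≤ q.2 ∧ p.2 < q.2 - (b : ℤ)) :=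
      fun hc => h (Or.inr (Or.inr hc))
    constructor
    · by_contra hlt
      exact hnot1 ⟨by omega, by omega⟩
    · by_contra hlt
      exact hnot2 ⟨hp2, by omega, by omega⟩
  rcases Finset.eq_empty_or_nonempty S1 with h1e | h1ne
  · -- S = S2 essentially
    have hb2 : (S2.card : ℤ) ≤ ((a : ℤ) - (b : ℤ) - 1 + 1 - (1 - 2 * (b : ℤ))).toNat := by
      apply card_aux _ _ _ hinj2
      intro q hq
      have hm := hS q (hsub2 hq)
      have hq2 : ¬ q.2 ≤ (b : ℤ) := (Finset.mem_filter.1 hq).2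
      unfold memP at hm
      omega
    have : S.card = S2.card := by
      rw [← hcard, h1e]; simp
    have hab' : (a : ℤ) ≤ (b : ℤ) := by exact_mod_cast hab
    have ha' : (2 : ℤ) ≤ (a : ℤ) := by exact_mod_cast ha
    have : (S.card : ℤ) ≤ (a : ℤ) + (b : ℤ) := by
      rw [this]
      refine hb2.trans ?_
      omega
    exact_mod_cast this
  rcases Finset.eq_empty_or_nonempty S2 with h2e | h2ne
  · have hb1 : (S1.card : ℤ) ≤ ((a : ℤ) - 1 + 1 - (1 - (b : ℤ))).toNat := by
      apply card_aux _ _ _ hinj1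
      intro p hp
      have hm := hS p (hsub1 hp)
      have hp2 : p.2 ≤ (b : ℤ) := (Finset.mem_filter.1 hp).2
      unfold memP at hm
      omega
    have : S.card = S1.card := by
      rw [← hcard, h2e]; simp
    have ha' : (2 : ℤ) ≤ (a : ℤ) := by exact_mod_cast ha
    have : (S.card : ℤ) ≤ (a : ℤ) + (b : ℤ) := by
      rw [this]
      refine hb1.trans ?_
      omega
    exact_mod_cast this
  -- both nonempty
  set X := S1.inf' h1ne (fun p => p.1) with hX
  set Y := S1.inf' h1ne (fun p => p.2) with hY
  obtain ⟨p0, hp0⟩ := h1ne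
  have hm0 := hS p0 (hsub1 hp0)
  unfold memP at hm0
  have hXle : X ≤ p0.1 := Finset.inf'_le _ hp0
  have hYle : Y ≤ p0.2 := Finset.inf'_le _ hp0
  have hX1 : 1 ≤ X := by
    rw [hX]; apply Finset.le_inf'
    intro p hp; exact (hS p (hsub1 hp)).1
  have hY1 : 1 ≤ Y := by
    rw [hY]; apply Finset.le_inf'
    intro p hp; exact (hS p (hsub1 hp)).2.2.1
  have hXa : X ≤ (a : ℤ) := hXle.trans hm0.2.1
  have hYb : Y ≤ (b : ℤ) := hYle.trans (Finset.mem_filter.1 hp0).2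
  have hb1 : (S1.card : ℤ) ≤ ((a : ℤ) - Y + 1 - (X - (b : ℤ))).toNat := by
    apply card_aux _ _ _ hinj1
    intro p hp
    have hm := hS p (hsub1 hp)
    have hp2 : p.2 ≤ (b : ℤ) := (Finset.mem_filter.1 hp).2
    have h1 : X ≤ p.1 := Finset.inf'_le _ hp
    have h2 : Y ≤ p.2 := Finset.inf'_le _ hp
    unfold memP at hm
    omega
  have hb2 : (S2.card : ℤ) ≤ (X - (b : ℤ) - 1 + 1 - (1 - Y - (b : ℤ))).toNat := by
    apply card_aux _ _ _ hinj2
    intro q hq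
    have hm := hS q (hsub2 hq)
    have hq2 : ¬ q.2 ≤ (b : ℤ) := (Finset.mem_filter.1 hq).2
    have hqX : q.1 ≤ X := by
      rw [hX]; apply Finset.le_inf'
      intro p hp; exact (hcross p hp q hq).1
    have hqY : q.2 - (b : ℤ) ≤ Y := by
      rw [hY]; apply Finset.le_inf'
      intro p hp; exact (hcross p hp q hq).2
    unfold memP at hm
    omega
  have : (S.card : ℤ) ≤ (a : ℤ) + (b : ℤ) := by
    have := hcard
    have hc : (S.card : ℤ) = (S1.card : ℤ) + (S2.card : ℤ) := by exact_mod_cast this.symm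
    rw [hc]
    have t1 : ((a : ℤ) - Y + 1 - (X - (b : ℤ))).toNat = ((a : ℤ) + (b : ℤ) + 1 - X - Y).toNat := by
      ring_nf
    omega
  exact_mod_cast this
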